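/- Let (H,α) be a monoidal Hom-Hopf algebra over a commutative ring k and let (M,μ) be a left-covariant (H,α)-Hom-bimodule with left coaction ρ(m)=m₍₋₁₎⊗m₍₀₎, and set P_L(m)=S(m₍₋₁₎)·m₍₀₎. Then P_L(m)=m for every m∈ᶜᵒᴴM, and P_L is the unique such map with its characteristic property: if P':M→M is k-linear with P'(M)⊆ᶜᵒᴴM, P'∘μ=μ∘P', P'(u)=u for all u∈ᶜᵒᴴM, and P'(h·m)=ε(h)μ(P'(m)) for all h∈H, m∈M, then P'=P_L. -/

import Mathlib

open TensorProduct

noncomputable def tmul2 {k A B C D E F : Type*} [CommRing k]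
    [AddCommGroup A] [AddCommGroup B] [AddCommGroup C] [AddCommGroup D]
    [AddCommGroup E] [AddCommGroup F]
    [Module k A] [Module k B] [Module k C] [Module k D] [Module k E] [Module k F]
    (f : A →ₗ[k] C →ₗ[k] E) (g : B →ₗ[k] D →ₗ[k] F) :
    (A ⊗[k] B) →ₗ[k] (C ⊗[k] D) →ₗ[k] (E ⊗[k] F) :=
  TensorProduct.curry
    ((TensorProduct.map (TensorProduct.lift f) (TensorProduct.lift g)) ∘ₗ
      (TensorProduct.tensorTensorTensorComm k A B C D).toLinearMap)

/-- A monoidal Hom-Hopf algebra over a commutative ring `k`. -/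
structure MonHomHopf (k H : Type*) [CommRing k] [AddCommGroup H] [Module k H] where
  α : H ≃ₗ[k] H
  mul : H →ₗ[k] H →ₗ[k] H
  one : H
  comul : H →ₗ[k] H ⊗[k] H
  counit : H →ₗ[k] k
  S : H →ₗ[k] H
  alpha_mul : ∀ g h, α (mul g h) = mul (α g) (α h)
  alpha_one : α one = one
  hom_assoc : ∀ g h l, mul (α g) (mul h l) = mul (mul g h) (α l)
  mul_one' : ∀ h, mul h one = α h
  one_mul' : ∀ h, mul one h = α h
  comul_alpha : ∀ h, comul (α h)
    = TensorProduct.map α.toLinearMap α.toLinearMap (comul h)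
  counit_alpha : ∀ h, counit (α h) = counit h
  hom_coassoc : ∀ h,
    (TensorProduct.assoc k H H H) ((TensorProduct.map comul α.symm.toLinearMap) (comul h))
      = (TensorProduct.map α.symm.toLinearMap comul) (comul h)
  counit_comul_left : ∀ h,
    (TensorProduct.lid k H) ((TensorProduct.map counit LinearMap.id) (comul h)) = α.symm h
  counit_comul_right : ∀ h,
    (TensorProduct.rid k H) ((TensorProduct.map LinearMap.id counit) (comul h)) = α.symm h
  comul_mul : ∀ g h, comul (mul g h) = tmul2 mul mul (comul g) (comul h)
  comul_one : comul one = one ⊗ₜ[k] one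
  counit_mul : ∀ g h, counit (mul g h) = counit g * counit h
  counit_one : counit one = 1
  antipode_left : ∀ h,
    (TensorProduct.lift mul) ((TensorProduct.map S LinearMap.id) (comul h)) = counit h • one
  antipode_right : ∀ h,
    (TensorProduct.lift mul) ((TensorProduct.map LinearMap.id S) (comul h)) = counit h • one
  S_alpha : ∀ h, S (α h) = α (S h)

namespace PLaux

variable {k H : Type*} [CommRing k] [AddCommGroup H] [Module k H]

theorem tmul2_tmul {A B C D E F : Type*}
    [AddCommGroup A] [AddCommGroup B] [AddCommGroup C] [AddCommGroup D]
    [AddCommGroup E] [AddCommGroup F]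
    [Module k A] [Module k B] [Module k C] [Module k D] [Module k E] [Module k F]
    (f : A →ₗ[k] C →ₗ[k] E) (g : B →ₗ[k] D →ₗ[k] F) (a : A) (b : B) (c : C) (d : D) :
    tmul2 f g (a ⊗ₜ[k] b) (c ⊗ₜ[k] d) = f a c ⊗ₜ[k] g b d := by
  simp [tmul2]

theorem map_map_apply {A B C D E F : Type*}
    [AddCommGroup A] [AddCommGroup B] [AddCommGroup C] [AddCommGroup D]
    [AddCommGroup E] [AddCommGroup F]
    [Module k A] [Module k B] [Module k C] [Module k D] [Module k E] [Module k F]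
    (f : C →ₗ[k] E) (g : D →ₗ[k] F) (f' : A →ₗ[k] C) (g' : B →ₗ[k] D) (t : A ⊗[k] B) :
    TensorProduct.map f g (TensorProduct.map f' g' t)
      = TensorProduct.map (f ∘ₗ f') (g ∘ₗ g') t := by
  rw [TensorProduct.map_comp]; rfl

variable (A : MonHomHopf k H)

/-- α as linear map -/
noncomputable abbrev la : H →ₗ[k] H := A.α.toLinearMap
/-- α⁻¹ as linear map -/
noncomputable abbrev ia : H →ₗ[k] H := A.α.symm.toLinearMap

noncomputable def M2 : (H ⊗[k] H) ⊗[k] (H ⊗[k] H) →ₗ[k] H ⊗[k] H :=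
  TensorProduct.lift (tmul2 A.mul A.mul)

noncomputable def GG : H ⊗[k] H →ₗ[k] H ⊗[k] H :=
  TensorProduct.map A.S A.S ∘ₗ (TensorProduct.comm k H H).toLinearMap

noncomputable def Fconv : H →ₗ[k] H ⊗[k] H := A.comul ∘ₗ A.S
noncomputable def Gconv : H →ₗ[k] H ⊗[k] H := GG A ∘ₗ A.comul
noncomputable def econv : H →ₗ[k] H ⊗[k] H := A.counit.smulRight (A.one ⊗ₜ[k] A.one)

noncomputable def conv (f g : H →ₗ[k] H ⊗[k] H) : H →ₗ[k] H ⊗[k] H :=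
  M2 A ∘ₗ TensorProduct.map f g ∘ₗ A.comul

theorem la_ia : la A ∘ₗ ia A = LinearMap.id := by
  ext h; simp

theorem ia_la : ia A ∘ₗ la A = LinearMap.id := by
  ext h; simp

theorem counit_ia (h : H) : A.counit (A.α.symm h) = A.counit h := by
  conv_rhs => rw [← A.α.apply_symm_apply h, A.counit_alpha]

theorem comul_la : A.comul ∘ₗ la A = TensorProduct.map (la A) (la A) ∘ₗ A.comul := by
  ext h; simpa using A.comul_alpha h

theorem comul_ia : A.comul ∘ₗ ia A = TensorProduct.map (ia A) (ia A) ∘ₗ A.comul := by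
  have hinj : Function.Injective (TensorProduct.map (la A) (la A)) := by
    have : TensorProduct.map (la A) (la A)
        = (TensorProduct.congr A.α A.α).toLinearMap := by
      apply TensorProduct.ext'; intro x y; simp
    rw [this]; exact (TensorProduct.congr A.α A.α).injective
  apply LinearMap.ext; intro h
  apply hinj
  simp only [LinearMap.comp_apply]
  rw [map_map_apply]
  have h1 : TensorProduct.map (la A ∘ₗ ia A) (la A ∘ₗ ia A) (A.comul h) = A.comul h := by
    rw [la_ia]; simp [TensorProduct.map_id]
  rw [h1]
  have := A.comul_alpha (A.α.symm h)
  simp only [LinearMap.comp_apply, LinearEquiv.coe_coe] at *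
  rw [← this, A.α.apply_symm_apply]

theorem S_ia (h : H) : A.S (A.α.symm h) = A.α.symm (A.S h) := by
  apply A.α.injective
  rw [← A.S_alpha, A.α.apply_symm_apply, A.α.apply_symm_apply]

theorem S_one : A.S A.one = A.one := by
  have h := A.antipode_left A.one
  rw [A.comul_one] at h
  simp only [TensorProduct.map_tmul, TensorProduct.lift.tmul, LinearMap.id_coe, id_eq,
    A.counit_one, one_smul] at h
  rw [A.mul_one'] at h
  have : A.α (A.S A.one) = A.α A.one := by rw [h, A.alpha_one]
  exact A.α.injective this

theorem counit_S (h : H) : A.counit (A.S h) = A.counit h := by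
  have key : (A.counit ∘ₗ TensorProduct.lift A.mul ∘ₗ TensorProduct.map A.S LinearMap.id :
      H ⊗[k] H →ₗ[k] k)
      = (A.counit ∘ₗ A.S) ∘ₗ (TensorProduct.rid k H).toLinearMap
          ∘ₗ TensorProduct.map LinearMap.id A.counit := by
    apply TensorProduct.ext'; intro g h
    simp only [LinearMap.comp_apply, TensorProduct.map_tmul, TensorProduct.lift.tmul,
      LinearMap.id_coe, id_eq, LinearEquiv.coe_coe, TensorProduct.rid_tmul, A.counit_mul,
      map_smul, smul_eq_mul]
    ring
  have h1 := congrArg A.counit (A.antipode_left h)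
  have h2 := congrArg (fun x => (A.counit ∘ₗ A.S) x)
    (A.counit_comul_right h)
  simp only [map_smul, A.counit_one, smul_eq_mul, mul_one] at h1
  have h3 : (A.counit ∘ₗ TensorProduct.lift A.mul ∘ₗ TensorProduct.map A.S LinearMap.id)
      (A.comul h) = A.counit h := by
    simpa using h1
  rw [key] at h3
  simp only [LinearMap.comp_apply, LinearEquiv.coe_coe] at h3 h2
  rw [h2] at h3
  rw [← h3, S_ia, counit_ia]

end PLaux

namespace PLaux

variable {k H : Type*} [CommRing k] [AddCommGroup H] [Module k H] (A : MonHomHopf k H)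

noncomputable abbrev assocH := TensorProduct.assoc k H H H

/-- Hom-coassociativity, inverted form. -/
theorem coassoc_symm (h : H) :
    TensorProduct.map A.comul (ia A) (A.comul h)
      = (assocH (k := k) (H := H)).symm
          (TensorProduct.map (ia A) A.comul (A.comul h)) := by
  rw [← A.hom_coassoc h, LinearEquiv.symm_apply_apply]

/-- c1 : (1 ⊗ Δ)Δ = (α ⊗ 1)(assoc)((Δ ⊗ α⁻¹)Δ) -/
theorem c1M (h : H) :
    TensorProduct.map LinearMap.id A.comul (A.comul h)
      = TensorProduct.map (la A) LinearMap.id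
          (assocH (k := k) (H := H) (TensorProduct.map A.comul (ia A) (A.comul h))) := by
  rw [A.hom_coassoc h, map_map_apply, la_ia]
  simp [map_map_apply]

/-- c3 : (Δ ⊗ 1)Δ = (1 ⊗ α)(assoc⁻¹)((α⁻¹ ⊗ Δ)Δ) -/
theorem c3M (h : H) :
    TensorProduct.map A.comul LinearMap.id (A.comul h)
      = TensorProduct.map (LinearMap.id : H ⊗[k] H →ₗ[k] H ⊗[k] H) (la A)
          ((assocH (k := k) (H := H)).symm
            (TensorProduct.map (ia A) A.comul (A.comul h))) := by
  rw [← coassoc_symm, map_map_apply, la_ia]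
  simp [map_map_apply]

/-- c2 : ((Δ∘α) ⊗ 1)Δ = ((α⊗α) ⊗ α)(assoc⁻¹)((α⁻¹ ⊗ Δ)Δ) -/
theorem c2M (h : H) :
    TensorProduct.map (A.comul ∘ₗ la A) LinearMap.id (A.comul h)
      = TensorProduct.map (TensorProduct.map (la A) (la A)) (la A)
          ((assocH (k := k) (H := H)).symm
            (TensorProduct.map (ia A) A.comul (A.comul h))) := by
  have : TensorProduct.map (A.comul ∘ₗ la A) LinearMap.id (A.comul h)
      = TensorProduct.map (TensorProduct.map (la A) (la A)) LinearMap.id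
          (TensorProduct.map A.comul LinearMap.id (A.comul h)) := by
    rw [map_map_apply, ← comul_la]; simp
  rw [this, c3M, map_map_apply]
  simp [map_map_apply]

theorem m2_hom_assoc (X Y Z : H ⊗[k] H) :
    tmul2 A.mul A.mul (TensorProduct.map (la A) (la A) X) (tmul2 A.mul A.mul Y Z)
      = tmul2 A.mul A.mul (tmul2 A.mul A.mul X Y) (TensorProduct.map (la A) (la A) Z) := by
  induction X using TensorProduct.induction_on with
  | zero => simp
  | add a b ha hb => simp only [map_add, LinearMap.add_apply, ha, hb]
  | tmul a b =>
    induction Y using TensorProduct.induction_on with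
    | zero => simp
    | add c d hc hd =>
        simp only [map_add, LinearMap.add_apply, LinearMap.map_add, hc, hd]
    | tmul c d =>
      induction Z using TensorProduct.induction_on with
      | zero => simp
      | add e f he hf => simp only [map_add, LinearMap.map_add, he, hf]
      | tmul e f =>
        simp only [TensorProduct.map_tmul, tmul2_tmul, LinearEquiv.coe_coe]
        rw [A.hom_assoc, A.hom_assoc]

theorem m2_one_left (T : H ⊗[k] H) :
    tmul2 A.mul A.mul (A.one ⊗ₜ[k] A.one) T = TensorProduct.map (la A) (la A) T := by
  induction T using TensorProduct.induction_on with
  | zero => simp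
  | add a b ha hb => simp only [map_add, ha, hb]
  | tmul a b => simp [tmul2_tmul, A.one_mul']

theorem m2_one_right (T : H ⊗[k] H) :
    tmul2 A.mul A.mul T (A.one ⊗ₜ[k] A.one) = TensorProduct.map (la A) (la A) T := by
  induction T using TensorProduct.induction_on with
  | zero => simp
  | add a b ha hb => simp only [map_add, LinearMap.add_apply, ha, hb]
  | tmul a b => simp [tmul2_tmul, A.mul_one']

theorem conv_apply (f g : H →ₗ[k] H ⊗[k] H) (h : H) :
    conv A f g h = M2 A (TensorProduct.map f g (A.comul h)) := rfl

/-- `e * f = f` for `f` commuting with α. -/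
theorem conv_e_left (f : H →ₗ[k] H ⊗[k] H)
    (hf : TensorProduct.map (la A) (la A) ∘ₗ f = f ∘ₗ la A) :
    conv A (econv A) f = f := by
  apply LinearMap.ext; intro h
  have key : (M2 A ∘ₗ TensorProduct.map (econv A) f : H ⊗[k] H →ₗ[k] H ⊗[k] H)
      = TensorProduct.map (la A) (la A) ∘ₗ f ∘ₗ (TensorProduct.lid k H).toLinearMap
          ∘ₗ TensorProduct.map A.counit LinearMap.id := by
    apply TensorProduct.ext'; intro g x
    have l1 : (M2 A ∘ₗ TensorProduct.map (econv A) f) (g ⊗ₜ[k] x)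
        = A.counit g • tmul2 A.mul A.mul (A.one ⊗ₜ[k] A.one) (f x) := by
      simp only [LinearMap.comp_apply, TensorProduct.map_tmul, econv,
        LinearMap.smulRight_apply, M2, TensorProduct.lift.tmul, map_smul,
        LinearMap.smul_apply]
    rw [l1, m2_one_left]
    simp [TensorProduct.smul_tmul', map_smul]
  have l2 : conv A (econv A) f h
      = (M2 A ∘ₗ TensorProduct.map (econv A) f) (A.comul h) := rfl
  rw [l2, key]
  simp only [LinearMap.comp_apply, LinearEquiv.coe_coe]
  rw [A.counit_comul_left]
  have l3 := LinearMap.congr_fun hf (A.α.symm h)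
  simp only [LinearMap.comp_apply, LinearEquiv.coe_coe] at l3
  rw [l3, A.α.apply_symm_apply]

/-- `f * e = f` for `f` commuting with α. -/
theorem conv_e_right (f : H →ₗ[k] H ⊗[k] H)
    (hf : TensorProduct.map (la A) (la A) ∘ₗ f = f ∘ₗ la A) :
    conv A f (econv A) = f := by
  apply LinearMap.ext; intro h
  have key : (M2 A ∘ₗ TensorProduct.map f (econv A) : H ⊗[k] H →ₗ[k] H ⊗[k] H)
      = TensorProduct.map (la A) (la A) ∘ₗ f ∘ₗ (TensorProduct.rid k H).toLinearMap
          ∘ₗ TensorProduct.map LinearMap.id A.counit := by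
    apply TensorProduct.ext'; intro x g
    have l1 : (M2 A ∘ₗ TensorProduct.map f (econv A)) (x ⊗ₜ[k] g)
        = A.counit g • tmul2 A.mul A.mul (f x) (A.one ⊗ₜ[k] A.one) := by
      simp only [LinearMap.comp_apply, TensorProduct.map_tmul, econv,
        LinearMap.smulRight_apply, M2, TensorProduct.lift.tmul, TensorProduct.tmul_smul,
        map_smul]
    rw [l1, m2_one_right]
    simp [map_smul]
  have l2 : conv A f (econv A) h
      = (M2 A ∘ₗ TensorProduct.map f (econv A)) (A.comul h) := rfl
  rw [l2, key]
  simp only [LinearMap.comp_apply, LinearEquiv.coe_coe]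
  rw [A.counit_comul_right]
  have l3 := LinearMap.congr_fun hf (A.α.symm h)
  simp only [LinearMap.comp_apply, LinearEquiv.coe_coe] at l3
  rw [l3, A.α.apply_symm_apply]

end PLaux

namespace PLaux

variable {k H : Type*} [CommRing k] [AddCommGroup H] [Module k H] (A : MonHomHopf k H)

theorem conv_assoc (f g K : H →ₗ[k] H ⊗[k] H)
    (hf : TensorProduct.map (la A) (la A) ∘ₗ f = f ∘ₗ la A)
    (hk : TensorProduct.map (la A) (la A) ∘ₗ K = K ∘ₗ la A) :
    conv A (conv A f g) K = conv A f (conv A g K) := by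
  have key : (M2 A ∘ₗ TensorProduct.map (M2 A ∘ₗ TensorProduct.map f g) (K ∘ₗ la A)
        ∘ₗ (assocH (k := k) (H := H)).symm.toLinearMap : H ⊗[k] (H ⊗[k] H) →ₗ[k] H ⊗[k] H)
      = M2 A ∘ₗ TensorProduct.map (f ∘ₗ la A) (M2 A ∘ₗ TensorProduct.map g K) := by
    apply TensorProduct.ext'; intro x t
    induction t using TensorProduct.induction_on with
    | zero => simp
    | add a b ha hb => simp only [TensorProduct.tmul_add, map_add, ha, hb]
    | tmul y z =>
      simp only [LinearMap.comp_apply, LinearEquiv.coe_coe, TensorProduct.assoc_symm_tmul,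
        TensorProduct.map_tmul, M2, TensorProduct.lift.tmul]
      have hkz := LinearMap.congr_fun hk z
      have hfx := LinearMap.congr_fun hf x
      simp only [LinearMap.comp_apply, LinearEquiv.coe_coe] at hkz hfx
      rw [← hkz, ← hfx, m2_hom_assoc]
  apply LinearMap.ext; intro h
  have l1 : conv A (conv A f g) K h
      = M2 A (TensorProduct.map (M2 A ∘ₗ TensorProduct.map f g) (K ∘ₗ la A)
          ((assocH (k := k) (H := H)).symm
            (TensorProduct.map (ia A) A.comul (A.comul h)))) := by
    have e1 : TensorProduct.map (conv A f g) K (A.comul h)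
        = TensorProduct.map (M2 A ∘ₗ TensorProduct.map f g) K
            (TensorProduct.map A.comul LinearMap.id (A.comul h)) := by
      rw [map_map_apply, LinearMap.comp_id]
      rw [LinearMap.comp_assoc]
      rfl
    rw [conv_apply, e1, c3M A h, map_map_apply, LinearMap.comp_id]
  have l2 : conv A f (conv A g K) h
      = M2 A (TensorProduct.map (f ∘ₗ la A) (M2 A ∘ₗ TensorProduct.map g K)
          (TensorProduct.map (ia A) A.comul (A.comul h))) := by
    have e1 : TensorProduct.map f (conv A g K) (A.comul h)
        = TensorProduct.map f (M2 A ∘ₗ TensorProduct.map g K)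
            (TensorProduct.map LinearMap.id A.comul (A.comul h)) := by
      rw [map_map_apply, LinearMap.comp_id]
      rw [LinearMap.comp_assoc]
      rfl
    have e2 : TensorProduct.map LinearMap.id A.comul (A.comul h)
        = TensorProduct.map (la A) LinearMap.id
            (TensorProduct.map (ia A) A.comul (A.comul h)) := by
      rw [c1M A h, A.hom_coassoc h]
    have e3 : TensorProduct.map f (M2 A ∘ₗ TensorProduct.map g K)
          (TensorProduct.map (la A) LinearMap.id
            (TensorProduct.map (ia A) A.comul (A.comul h)))
        = TensorProduct.map (f ∘ₗ la A) (M2 A ∘ₗ TensorProduct.map g K)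
            (TensorProduct.map (ia A) A.comul (A.comul h)) := by
      rw [map_map_apply, LinearMap.comp_id]
    rw [conv_apply, e1, e2, e3]
  rw [l1, l2]
  exact congrArg (fun (u : H ⊗[k] (H ⊗[k] H) →ₗ[k] H ⊗[k] H) =>
    u (TensorProduct.map (ia A) A.comul (A.comul h))) key

theorem comulMulM : (M2 A ∘ₗ TensorProduct.map A.comul A.comul :
    H ⊗[k] H →ₗ[k] H ⊗[k] H) = A.comul ∘ₗ TensorProduct.lift A.mul := by
  apply TensorProduct.ext'; intro g h
  simp only [LinearMap.comp_apply, TensorProduct.map_tmul, M2, TensorProduct.lift.tmul]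
  exact (A.comul_mul g h).symm

theorem conv_FD : conv A (Fconv A) A.comul = econv A := by
  apply LinearMap.ext; intro h
  have s1 : TensorProduct.map (Fconv A) A.comul (A.comul h)
      = TensorProduct.map A.comul A.comul
          (TensorProduct.map A.S LinearMap.id (A.comul h)) := by
    rw [map_map_apply, LinearMap.comp_id]; rfl
  rw [conv_apply, s1, ← LinearMap.comp_apply (M2 A), comulMulM]
  simp only [LinearMap.comp_apply, A.antipode_left h, map_smul, A.comul_one]
  simp [econv]

noncomputable def Q2 : (H ⊗[k] H) ⊗[k] H →ₗ[k] H ⊗[k] H :=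
  M2 A ∘ₗ TensorProduct.map LinearMap.id (GG A)
    ∘ₗ TensorProduct.map (A.comul ∘ₗ la A) LinearMap.id
    ∘ₗ (assocH (k := k) (H := H)).toLinearMap

theorem stepD0 (z₀ : H) (w : H) :
    Q2 A (A.comul w ⊗ₜ[k] z₀) = A.mul (A.α.symm w) (A.S z₀) ⊗ₜ[k] A.one := by
  -- Y' : evaluation of Q2 on (T ⊗ z₀)
  have claim1 : (Q2 A ∘ₗ (TensorProduct.mk k (H ⊗[k] H) H).flip z₀ :
        H ⊗[k] H →ₗ[k] H ⊗[k] H)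
      = M2 A ∘ₗ TensorProduct.map (A.comul ∘ₗ la A)
          ((TensorProduct.mk k H H (A.S z₀)) ∘ₗ A.S) := by
    apply TensorProduct.ext'; intro x y
    simp [Q2, GG, M2]
  have a1 : Q2 A (A.comul w ⊗ₜ[k] z₀)
      = (M2 A ∘ₗ TensorProduct.map (A.comul ∘ₗ la A)
          ((TensorProduct.mk k H H (A.S z₀)) ∘ₗ A.S)) (A.comul w) := by
    have := LinearMap.congr_fun claim1 (A.comul w)
    simpa using this
  -- factor and apply c2M at w
  have a2 : TensorProduct.map (A.comul ∘ₗ la A)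
        ((TensorProduct.mk k H H (A.S z₀)) ∘ₗ A.S) (A.comul w)
      = TensorProduct.map LinearMap.id ((TensorProduct.mk k H H (A.S z₀)) ∘ₗ A.S)
          (TensorProduct.map (A.comul ∘ₗ la A) LinearMap.id (A.comul w)) := by
    rw [map_map_apply, LinearMap.comp_id, LinearMap.id_comp]
  have a3 := c2M A w
  -- Y₃
  set Y3 : H ⊗[k] (H ⊗[k] H) →ₗ[k] H ⊗[k] H :=
    M2 A ∘ₗ TensorProduct.map LinearMap.id ((TensorProduct.mk k H H (A.S z₀)) ∘ₗ A.S)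
      ∘ₗ TensorProduct.map (TensorProduct.map (la A) (la A)) (la A)
      ∘ₗ (assocH (k := k) (H := H)).symm.toLinearMap with hY3
  have a4 : Q2 A (A.comul w ⊗ₜ[k] z₀)
      = Y3 (TensorProduct.map (ia A) A.comul (A.comul w)) := by
    rw [a1]
    simp only [LinearMap.comp_apply, LinearEquiv.coe_coe, hY3]
    rw [a2, a3]
  -- a5 : Y3 ∘ map ia Δ = Z
  have a5 : (Y3 ∘ₗ TensorProduct.map (ia A) A.comul : H ⊗[k] H →ₗ[k] H ⊗[k] H)
      = ((TensorProduct.mk k H H).flip A.one) ∘ₗ A.mul.flip (A.S z₀)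
          ∘ₗ (TensorProduct.rid k H).toLinearMap
          ∘ₗ TensorProduct.map LinearMap.id A.counit := by
    apply TensorProduct.ext'; intro u v
    have phi : (Y3 ∘ₗ TensorProduct.mk k H (H ⊗[k] H) (A.α.symm u) :
          H ⊗[k] H →ₗ[k] H ⊗[k] H)
        = (TensorProduct.mk k H H (A.mul u (A.S z₀))) ∘ₗ la A
            ∘ₗ TensorProduct.lift A.mul ∘ₗ TensorProduct.map LinearMap.id A.S := by
      apply TensorProduct.ext'; intro y y'
      simp only [LinearMap.comp_apply, TensorProduct.mk_apply, hY3, LinearEquiv.coe_coe,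
        TensorProduct.assoc_symm_tmul, TensorProduct.map_tmul, LinearMap.id_coe, id_eq,
        M2, TensorProduct.lift.tmul, tmul2_tmul]
      rw [A.α.apply_symm_apply, A.S_alpha, ← A.alpha_mul]
    have l := LinearMap.congr_fun phi (A.comul v)
    simp only [LinearMap.comp_apply, TensorProduct.mk_apply, LinearEquiv.coe_coe] at l
    have : Y3 (A.α.symm u ⊗ₜ[k] A.comul v)
        = A.mul u (A.S z₀) ⊗ₜ[k] A.α (A.counit v • A.one) := by
      rw [l, A.antipode_right v]
    simp only [LinearMap.comp_apply, TensorProduct.map_tmul, LinearEquiv.coe_coe,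
      LinearMap.id_coe, id_eq, TensorProduct.rid_tmul, LinearMap.flip_apply,
      TensorProduct.mk_apply]
    rw [this]
    simp only [map_smul, A.alpha_one, TensorProduct.tmul_smul, LinearMap.map_smul,
      LinearMap.smul_apply]
    rw [TensorProduct.smul_tmul']
  have l5 := LinearMap.congr_fun a5 (A.comul w)
  simp only [LinearMap.comp_apply] at l5
  rw [a4, l5]
  have := A.counit_comul_right w
  simp only [LinearEquiv.coe_coe] at this ⊢
  rw [this]
  simp

theorem conv_DG : conv A A.comul (Gconv A) = econv A := by
  apply LinearMap.ext; intro h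
  have s1 : TensorProduct.map A.comul (Gconv A) (A.comul h)
      = TensorProduct.map LinearMap.id (GG A)
          (TensorProduct.map A.comul A.comul (A.comul h)) := by
    rw [map_map_apply, LinearMap.id_comp]; rfl
  have s4 : TensorProduct.map A.comul A.comul (A.comul h)
      = TensorProduct.map (A.comul ∘ₗ la A) LinearMap.id
          (TensorProduct.map (ia A) A.comul (A.comul h)) := by
    rw [map_map_apply, LinearMap.comp_assoc, la_ia, LinearMap.comp_id,
      LinearMap.id_comp]
  have s5 : conv A A.comul (Gconv A) h
      = Q2 A (TensorProduct.map A.comul (ia A) (A.comul h)) := by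
    rw [conv_apply, s1, s4, ← A.hom_coassoc h]
    simp only [Q2, LinearMap.comp_apply, LinearEquiv.coe_coe]
  have s6 : (Q2 A ∘ₗ TensorProduct.map A.comul (ia A) : H ⊗[k] H →ₗ[k] H ⊗[k] H)
      = ((TensorProduct.mk k H H).flip A.one) ∘ₗ TensorProduct.lift A.mul
          ∘ₗ TensorProduct.map (ia A) (A.S ∘ₗ ia A) := by
    apply TensorProduct.ext'; intro w z
    simp only [LinearMap.comp_apply, TensorProduct.map_tmul, LinearEquiv.coe_coe,
      TensorProduct.lift.tmul, LinearMap.flip_apply, TensorProduct.mk_apply]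
    exact stepD0 A (A.α.symm z) w
  have l6 := LinearMap.congr_fun s6 (A.comul h)
  simp only [LinearMap.comp_apply] at l6
  rw [s5, l6]
  have s7 : TensorProduct.map (ia A) (A.S ∘ₗ ia A) (A.comul h)
      = TensorProduct.map LinearMap.id A.S (A.comul (A.α.symm h)) := by
    have hcia := LinearMap.congr_fun (comul_ia A) h
    simp only [LinearMap.comp_apply, LinearEquiv.coe_coe] at hcia
    rw [hcia, map_map_apply, LinearMap.id_comp]
  rw [s7, A.antipode_right (A.α.symm h)]
  simp only [map_smul, LinearMap.flip_apply, TensorProduct.mk_apply]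
  rw [counit_ia]
  simp [econv, TensorProduct.smul_tmul']

theorem acF : TensorProduct.map (la A) (la A) ∘ₗ Fconv A = Fconv A ∘ₗ la A := by
  apply LinearMap.ext; intro h
  simp only [Fconv, LinearMap.comp_apply, LinearEquiv.coe_coe]
  rw [A.S_alpha, A.comul_alpha]

theorem GG_la : GG A ∘ₗ TensorProduct.map (la A) (la A)
    = TensorProduct.map (la A) (la A) ∘ₗ GG A := by
  apply TensorProduct.ext'; intro x y
  simp only [LinearMap.comp_apply, TensorProduct.map_tmul, GG, LinearEquiv.coe_coe,
    TensorProduct.comm_tmul]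
  rw [A.S_alpha, A.S_alpha]

theorem acG : TensorProduct.map (la A) (la A) ∘ₗ Gconv A = Gconv A ∘ₗ la A := by
  apply LinearMap.ext; intro h
  simp only [Gconv, LinearMap.comp_apply, LinearEquiv.coe_coe]
  rw [A.comul_alpha]
  have := LinearMap.congr_fun (GG_la A) (A.comul h)
  simp only [LinearMap.comp_apply] at this
  rw [this]

theorem S_anticomul : A.comul ∘ₗ A.S = GG A ∘ₗ A.comul := by
  have acD : TensorProduct.map (la A) (la A) ∘ₗ A.comul = A.comul ∘ₗ la A :=
    (comul_la A).symm
  calc A.comul ∘ₗ A.S = Fconv A := rfl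
    _ = conv A (Fconv A) (econv A) := (conv_e_right A _ (acF A)).symm
    _ = conv A (Fconv A) (conv A A.comul (Gconv A)) := by rw [conv_DG]
    _ = conv A (conv A (Fconv A) A.comul) (Gconv A) :=
        (conv_assoc A (Fconv A) A.comul (Gconv A) (acF A) (acG A)).symm
    _ = conv A (econv A) (Gconv A) := by rw [conv_FD]
    _ = Gconv A := conv_e_left A _ (acG A)

end PLaux

/-- A left-covariant `(H,α)`-Hom-bimodule. -/
structure LeftCovBimod {k H : Type*} [CommRing k] [AddCommGroup H] [Module k H]
    (A : MonHomHopf k H) (M : Type*) [AddCommGroup M] [Module k M] where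
  μ : M ≃ₗ[k] M
  lact : H →ₗ[k] M →ₗ[k] M
  ract : M →ₗ[k] H →ₗ[k] M
  lact_assoc : ∀ g h m, lact (A.α g) (lact h m) = lact (A.mul g h) (μ m)
  lact_one : ∀ m, lact A.one m = μ m
  mu_lact : ∀ h m, μ (lact h m) = lact (A.α h) (μ m)
  ract_assoc : ∀ m g h, ract (μ m) (A.mul g h) = ract (ract m g) (A.α h)
  ract_one : ∀ m, ract m A.one = μ m
  mu_ract : ∀ m h, μ (ract m h) = ract (μ m) (A.α h)
  bimod : ∀ h m g, ract (lact h m) (A.α g) = lact (A.α h) (ract m g)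
  rho : M →ₗ[k] H ⊗[k] M
  rho_coassoc : ∀ m,
    (TensorProduct.map (LinearMap.id : H →ₗ[k] H) rho) (rho m)
      = (TensorProduct.assoc k H H M)
          ((TensorProduct.map
              ((TensorProduct.map A.α.toLinearMap (LinearMap.id : H →ₗ[k] H)) ∘ₗ A.comul)
              μ.symm.toLinearMap) (rho m))
  rho_counit : ∀ m,
    (TensorProduct.lid k M) ((TensorProduct.map A.counit (LinearMap.id : M →ₗ[k] M)) (rho m))
      = μ.symm m
  rho_mu : ∀ m, rho (μ m) = TensorProduct.map A.α.toLinearMap μ.toLinearMap (rho m)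
  rho_cov : ∀ h g m,
    rho (ract (lact h m) (A.α g))
      = tmul2 A.mul lact (A.comul (A.α h)) (tmul2 A.mul ract (rho m) (A.comul g))

/-- The projection `P_L(m) = S(m₍₋₁₎) · m₍₀₎`. -/
noncomputable def LeftCovBimod.PL {k H : Type*} [CommRing k] [AddCommGroup H] [Module k H]
    {A : MonHomHopf k H} {M : Type*} [AddCommGroup M] [Module k M]
    (B : LeftCovBimod A M) : M →ₗ[k] M :=
  (TensorProduct.lift (B.lact ∘ₗ A.S)) ∘ₗ B.rho

namespace PLaux

variable {k H : Type*} [CommRing k] [AddCommGroup H] [Module k H] {A : MonHomHopf k H}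
variable {M : Type*} [AddCommGroup M] [Module k M] (B : LeftCovBimod A M)

noncomputable abbrev lm : M →ₗ[k] M := B.μ.toLinearMap
noncomputable abbrev im : M →ₗ[k] M := B.μ.symm.toLinearMap

theorem t2_ract_one (T : H ⊗[k] M) :
    tmul2 A.mul B.ract T (A.one ⊗ₜ[k] A.one) = TensorProduct.map (la A) (lm B) T := by
  induction T using TensorProduct.induction_on with
  | zero => simp
  | add a b ha hb => simp only [map_add, LinearMap.add_apply, ha, hb]
  | tmul a b => simp [tmul2_tmul, A.mul_one', B.ract_one]

theorem rho_lact (h : H) (m : M) :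
    B.rho (B.lact h m) = tmul2 A.mul B.lact (A.comul h) (B.rho m) := by
  have k0 := B.rho_cov (A.α.symm h) A.one (B.μ.symm m)
  rw [A.alpha_one, B.ract_one, B.mu_lact, A.α.apply_symm_apply, B.μ.apply_symm_apply,
    A.comul_one, t2_ract_one] at k0
  rw [k0, ← B.rho_mu, B.μ.apply_symm_apply]

theorem rho_lactM :
    B.rho ∘ₗ TensorProduct.lift B.lact
      = TensorProduct.lift (tmul2 A.mul B.lact) ∘ₗ TensorProduct.map A.comul B.rho := by
  apply TensorProduct.ext'; intro h x
  simp only [LinearMap.comp_apply, TensorProduct.lift.tmul, TensorProduct.map_tmul]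
  exact rho_lact B h x

theorem lift_lactS :
    TensorProduct.lift (B.lact ∘ₗ A.S)
      = TensorProduct.lift B.lact ∘ₗ TensorProduct.map A.S LinearMap.id := by
  apply TensorProduct.ext'; intro h x
  simp

theorem PL_apply (m : M) :
    B.PL m = TensorProduct.lift (B.lact ∘ₗ A.S) (B.rho m) := rfl

theorem PL_mu (m : M) : B.PL (B.μ m) = B.μ (B.PL m) := by
  have key : (TensorProduct.lift (B.lact ∘ₗ A.S)
        ∘ₗ TensorProduct.map (la A) (lm B) : H ⊗[k] M →ₗ[k] M)
      = lm B ∘ₗ TensorProduct.lift (B.lact ∘ₗ A.S) := by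
    apply TensorProduct.ext'; intro h x
    simp only [LinearMap.comp_apply, TensorProduct.map_tmul, TensorProduct.lift.tmul,
      LinearEquiv.coe_coe]
    rw [A.S_alpha, ← B.mu_lact]
  have := LinearMap.congr_fun key (B.rho m)
  simp only [LinearMap.comp_apply, LinearEquiv.coe_coe] at this
  rw [PL_apply, B.rho_mu, this, PL_apply]

theorem PL_imu (m : M) : B.PL (B.μ.symm m) = B.μ.symm (B.PL m) := by
  apply B.μ.injective
  rw [← PL_mu, B.μ.apply_symm_apply, B.μ.apply_symm_apply]

theorem rho_imu (m : M) :
    B.rho (B.μ.symm m) = TensorProduct.map (ia A) (im B) (B.rho m) := by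
  have h0 := B.rho_mu (B.μ.symm m)
  rw [B.μ.apply_symm_apply] at h0
  rw [h0, map_map_apply]
  have e1 : (ia A) ∘ₗ (la A) = LinearMap.id := ia_la A
  have e2 : (im B) ∘ₗ (lm B) = LinearMap.id := by ext x; simp
  rw [e1, e2]
  simp

/-- The key coinvariance computation. -/
theorem PL_coinv (m : M) :
    B.rho (B.PL m) = A.one ⊗ₜ[k] (B.μ.symm (B.PL m)) := by
  set Θ : (H ⊗[k] H) ⊗[k] M →ₗ[k] H ⊗[k] M :=
    TensorProduct.lift (tmul2 A.mul B.lact)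
      ∘ₗ TensorProduct.map (GG A) (LinearMap.id : H ⊗[k] M →ₗ[k] H ⊗[k] M)
      ∘ₗ TensorProduct.map A.comul (LinearMap.id : H ⊗[k] M →ₗ[k] H ⊗[k] M)
      ∘ₗ (TensorProduct.assoc k H H M).toLinearMap with hTheta
  -- step r: ρ(PL m) = Θ (map ((map la id)∘Δ) iμ (ρ m))
  have r1 : B.rho (B.PL m)
      = TensorProduct.lift (tmul2 A.mul B.lact)
          (TensorProduct.map (A.comul ∘ₗ A.S) B.rho (B.rho m)) := by
    rw [PL_apply, lift_lactS]
    simp only [LinearMap.comp_apply]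
    have := LinearMap.congr_fun (rho_lactM B)
      (TensorProduct.map A.S LinearMap.id (B.rho m))
    simp only [LinearMap.comp_apply] at this
    rw [this, map_map_apply, LinearMap.comp_id]
  have r2 : TensorProduct.map (A.comul ∘ₗ A.S) B.rho (B.rho m)
      = TensorProduct.map (GG A) LinearMap.id
          (TensorProduct.map A.comul LinearMap.id
            (TensorProduct.map LinearMap.id B.rho (B.rho m))) := by
    rw [map_map_apply, map_map_apply, LinearMap.comp_id, LinearMap.comp_id,
      LinearMap.id_comp, S_anticomul]
  have r3 : B.rho (B.PL m)
      = Θ (TensorProduct.map ((TensorProduct.map (la A) LinearMap.id) ∘ₗ A.comul)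
            (im B) (B.rho m)) := by
    rw [r1, r2, B.rho_coassoc m, hTheta]
    simp only [LinearMap.comp_apply, LinearEquiv.coe_coe]
  -- the main map identity
  have thetaM : (Θ ∘ₗ TensorProduct.map ((TensorProduct.map (la A) LinearMap.id) ∘ₗ A.comul)
        (im B) : H ⊗[k] M →ₗ[k] H ⊗[k] M)
      = (TensorProduct.mk k H M A.one) ∘ₗ TensorProduct.lift (B.lact ∘ₗ A.S)
          ∘ₗ TensorProduct.map (ia A) (im B) := by
    apply TensorProduct.ext'; intro u n
    set n₀ : M := B.μ.symm n with hn0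
    set J : H ⊗[k] H →ₗ[k] H ⊗[k] M :=
      Θ ∘ₗ ((TensorProduct.mk k (H ⊗[k] H) M).flip n₀)
        ∘ₗ TensorProduct.map (la A) LinearMap.id with hJ
    have lhs0 : (Θ ∘ₗ TensorProduct.map ((TensorProduct.map (la A) LinearMap.id) ∘ₗ A.comul)
          (im B)) (u ⊗ₜ[k] n) = J (A.comul u) := by
      simp [hJ]
      rfl
    have hJ1 : J = TensorProduct.lift (tmul2 A.mul B.lact)
        ∘ₗ TensorProduct.map (GG A) ((TensorProduct.mk k H M).flip n₀)
        ∘ₗ TensorProduct.map (A.comul ∘ₗ la A) LinearMap.id := by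
      apply TensorProduct.ext'; intro x y
      simp [hJ, hTheta, GG]
    set K : H ⊗[k] (H ⊗[k] H) →ₗ[k] H ⊗[k] M :=
      TensorProduct.lift (tmul2 A.mul B.lact)
        ∘ₗ TensorProduct.map (GG A) ((TensorProduct.mk k H M).flip n₀)
        ∘ₗ TensorProduct.map (TensorProduct.map (la A) (la A)) (la A)
        ∘ₗ (assocH (k := k) (H := H)).symm.toLinearMap with hK
    have hJ2 : J (A.comul u) = K (TensorProduct.map (ia A) A.comul (A.comul u)) := by
      rw [hJ1]
      simp only [LinearMap.comp_apply]
      rw [c2M A u, hK]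
      simp only [LinearMap.comp_apply, LinearEquiv.coe_coe]
    have hKK : (K ∘ₗ TensorProduct.map (ia A) A.comul : H ⊗[k] H →ₗ[k] H ⊗[k] M)
        = (TensorProduct.mk k H M A.one) ∘ₗ (B.lact.flip n₀) ∘ₗ A.S
            ∘ₗ (TensorProduct.rid k H).toLinearMap
            ∘ₗ TensorProduct.map LinearMap.id A.counit := by
      apply TensorProduct.ext'; intro u' v
      have phi : (K ∘ₗ TensorProduct.mk k H (H ⊗[k] H) (A.α.symm u') :
            H ⊗[k] H →ₗ[k] H ⊗[k] M)
          = ((TensorProduct.mk k H M).flip (B.lact (A.S u') n₀)) ∘ₗ la A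
              ∘ₗ TensorProduct.lift A.mul ∘ₗ TensorProduct.map A.S LinearMap.id := by
        apply TensorProduct.ext'; intro y y'
        simp only [LinearMap.comp_apply, TensorProduct.mk_apply, hK, LinearEquiv.coe_coe,
          TensorProduct.assoc_symm_tmul, TensorProduct.map_tmul, LinearMap.id_coe, id_eq,
          TensorProduct.lift.tmul, tmul2_tmul, GG, TensorProduct.comm_tmul,
          LinearMap.flip_apply]
        rw [A.α.apply_symm_apply, A.S_alpha, ← A.alpha_mul]
      have l := LinearMap.congr_fun phi (A.comul v)
      simp only [LinearMap.comp_apply, TensorProduct.mk_apply, LinearEquiv.coe_coe] at l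
      simp only [LinearMap.comp_apply, TensorProduct.map_tmul, LinearEquiv.coe_coe,
        LinearMap.id_coe, id_eq]
      rw [l, A.antipode_left v]
      simp [A.alpha_one, TensorProduct.smul_tmul', TensorProduct.tmul_smul,
        TensorProduct.rid_tmul]
    have lK := LinearMap.congr_fun hKK (A.comul u)
    simp only [LinearMap.comp_apply, LinearEquiv.coe_coe] at lK
    have lcr := A.counit_comul_right u
    rw [lhs0, hJ2, lK, lcr]
    simp only [LinearMap.comp_apply, TensorProduct.map_tmul, LinearEquiv.coe_coe,
      TensorProduct.lift.tmul, TensorProduct.mk_apply, LinearMap.flip_apply, hn0]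
  have lT := LinearMap.congr_fun thetaM (B.rho m)
  simp only [LinearMap.comp_apply] at lT
  rw [r3, lT, ← rho_imu, ← PL_apply, PL_imu]
  simp

/-- The decomposition `m = m₍₋₁₎ · P_L(m₍₀₎)`. -/
theorem decomp (m : M) :
    TensorProduct.lift B.lact (TensorProduct.map LinearMap.id B.PL (B.rho m)) = m := by
  set Λ : (H ⊗[k] H) ⊗[k] M →ₗ[k] M :=
    TensorProduct.lift B.lact
      ∘ₗ TensorProduct.map LinearMap.id (TensorProduct.lift (B.lact ∘ₗ A.S))
      ∘ₗ (TensorProduct.assoc k H H M).toLinearMap with hLam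
  have d1 : TensorProduct.lift B.lact (TensorProduct.map LinearMap.id B.PL (B.rho m))
      = Λ (TensorProduct.map ((TensorProduct.map (la A) LinearMap.id) ∘ₗ A.comul)
            (im B) (B.rho m)) := by
    have e1 : TensorProduct.map LinearMap.id B.PL (B.rho m)
        = TensorProduct.map LinearMap.id (TensorProduct.lift (B.lact ∘ₗ A.S))
            (TensorProduct.map LinearMap.id B.rho (B.rho m)) := by
      rw [map_map_apply, LinearMap.id_comp]; rfl
    have e2 := B.rho_coassoc m
    rw [e1, e2, hLam]
    simp only [LinearMap.comp_apply, LinearEquiv.coe_coe]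
  have lam : (Λ ∘ₗ TensorProduct.map ((TensorProduct.map (la A) LinearMap.id) ∘ₗ A.comul)
        (im B) : H ⊗[k] M →ₗ[k] M)
      = lm B ∘ₗ (TensorProduct.lid k M).toLinearMap
          ∘ₗ TensorProduct.map A.counit LinearMap.id := by
    apply TensorProduct.ext'; intro u n
    set n₀ : M := B.μ.symm n with hn0
    have hps : (Λ ∘ₗ ((TensorProduct.mk k (H ⊗[k] H) M).flip n₀)
          ∘ₗ TensorProduct.map (la A) LinearMap.id : H ⊗[k] H →ₗ[k] M)
        = B.lact.flip (B.μ n₀) ∘ₗ TensorProduct.lift A.mul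
            ∘ₗ TensorProduct.map LinearMap.id A.S := by
      apply TensorProduct.ext'; intro x y
      simp only [LinearMap.comp_apply, TensorProduct.mk_apply, LinearMap.flip_apply,
        hLam, LinearEquiv.coe_coe, TensorProduct.assoc_tmul, TensorProduct.map_tmul,
        LinearMap.id_coe, id_eq, TensorProduct.lift.tmul]
      rw [B.lact_assoc]
    have l := LinearMap.congr_fun hps (A.comul u)
    simp only [LinearMap.comp_apply, TensorProduct.mk_apply, LinearMap.flip_apply] at l
    simp only [LinearMap.comp_apply, TensorProduct.map_tmul, LinearEquiv.coe_coe,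
      TensorProduct.lid_tmul, LinearMap.id_coe, id_eq]
    rw [l, A.antipode_right u]
    simp only [LinearMap.map_smul, LinearMap.smul_apply, B.lact_one, hn0,
      B.μ.apply_symm_apply]
    rw [map_smul]
  have lL := LinearMap.congr_fun lam (B.rho m)
  simp only [LinearMap.comp_apply, LinearEquiv.coe_coe] at lL
  rw [d1, lL]
  have := B.rho_counit m
  rw [this, B.μ.apply_symm_apply]

end PLaux

/-- `P_L` is the identity on coinvariants and is the unique such projection. -/
theorem PL_unique {k H : Type*} [CommRing k] [AddCommGroup H] [Module k H]
    (A : MonHomHopf k H) {M : Type*} [AddCommGroup M] [Module k M]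
    (B : LeftCovBimod A M) :
    (∀ m : M, B.rho m = A.one ⊗ₜ[k] (B.μ.symm m) → B.PL m = m) ∧
    (∀ P' : M →ₗ[k] M,
      (∀ m, B.rho (P' m) = A.one ⊗ₜ[k] (B.μ.symm (P' m))) →
      (∀ m, P' (B.μ m) = B.μ (P' m)) →
      (∀ m, B.rho m = A.one ⊗ₜ[k] (B.μ.symm m) → P' m = m) →
      (∀ h m, P' (B.lact h m) = A.counit h • B.μ (P' m)) →
      P' = B.PL) := by
  constructor
  · intro m hm
    have h0 : B.PL m = TensorProduct.lift (B.lact ∘ₗ A.S) (B.rho m) := rfl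
    rw [h0, hm]
    simp only [TensorProduct.lift.tmul, LinearMap.comp_apply]
    rw [PLaux.S_one, B.lact_one, B.μ.apply_symm_apply]
  · intro P' hco hmu hid hact
    apply LinearMap.ext; intro m
    have U1 : (P' ∘ₗ TensorProduct.lift B.lact : H ⊗[k] M →ₗ[k] M)
        = B.μ.toLinearMap ∘ₗ P' ∘ₗ (TensorProduct.lid k M).toLinearMap
            ∘ₗ TensorProduct.map A.counit LinearMap.id := by
      apply TensorProduct.ext'; intro h x
      simp only [LinearMap.comp_apply, TensorProduct.map_tmul, LinearMap.id_coe, id_eq,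
        LinearEquiv.coe_coe, TensorProduct.lid_tmul, TensorProduct.lift.tmul,
        map_smul, LinearMap.map_smul]
      rw [hact]
    have U2 : ((TensorProduct.lid k M).toLinearMap
          ∘ₗ TensorProduct.map A.counit LinearMap.id
          ∘ₗ TensorProduct.map LinearMap.id B.PL : H ⊗[k] M →ₗ[k] M)
        = B.PL ∘ₗ (TensorProduct.lid k M).toLinearMap
            ∘ₗ TensorProduct.map A.counit LinearMap.id := by
      apply TensorProduct.ext'; intro u x
      simp only [LinearMap.comp_apply, TensorProduct.map_tmul, LinearMap.id_coe, id_eq,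
        LinearEquiv.coe_coe, TensorProduct.lid_tmul, map_smul, LinearMap.map_smul]
    have s1 : P' m
        = P' (TensorProduct.lift B.lact
            (TensorProduct.map LinearMap.id B.PL (B.rho m))) := by
      rw [PLaux.decomp]
    have s2 := LinearMap.congr_fun U1 (TensorProduct.map LinearMap.id B.PL (B.rho m))
    simp only [LinearMap.comp_apply, LinearEquiv.coe_coe] at s2
    have s3 := LinearMap.congr_fun U2 (B.rho m)
    simp only [LinearMap.comp_apply, LinearEquiv.coe_coe] at s3
    have s4 := B.rho_counit m
    rw [s1, s2, s3, s4]
    rw [hid _ (PLaux.PL_coinv B (B.μ.symm m)), PLaux.PL_imu, B.μ.apply_symm_apply]
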